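/- Let n ≥ 1 and let H be any finite dispersable bipartite graph with at least one edge (H is bipartite and mbt(H) = Δ(H) ≥ 1). Then S_n +_Q H is dispersable: mbt(S_n +_Q H) = Δ(S_n +_Q H) = n + Δ(H). -/

import Mathlib

open SimpleGraph

/-- Degree of a vertex. -/
noncomputable def deg {V : Type*} (G : SimpleGraph V) (v : V) : ℕ :=
  (G.neighborSet v).ncard

/-- Maximum degree Δ(G) of a finite simple graph. -/
noncomputable def maxDeg {V : Type*} [Fintype V] (G : SimpleGraph V) : ℕ :=
  Finset.univ.sup (deg G)

/-- `IsMBE G k f page` : the linear order on vertices given by the injection `f : V → ℕ`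
together with the page assignment `page` is a matching book embedding of `G` on `k` pages:
every edge gets a page `< k`, no two edges on a common page cross, and every vertex is
incident to at most one edge on each page. -/
def IsMBE {V : Type*} (G : SimpleGraph V) (k : ℕ) (f : V → ℕ) (page : Sym2 V → ℕ) : Prop :=
  Function.Injective f ∧
  (∀ u v, G.Adj u v → page s(u, v) < k) ∧
  (∀ u v x y, G.Adj u v → G.Adj x y → page s(u, v) = page s(x, y) →
    ¬(f u < f x ∧ f x < f v ∧ f v < f y)) ∧
  (∀ u v w, G.Adj u v → G.Adj u w → v ≠ w → page s(u, v) ≠ page s(u, w))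

/-- The matching book thickness of `G`: the least number of pages admitting a
matching book embedding. -/
noncomputable def mbt {V : Type*} (G : SimpleGraph V) : ℕ :=
  sInf {k | ∃ f page, IsMBE G k f page}

/-- A graph is outerplanar iff it has a one-page book embedding: a linear order of
its vertices (an injection into `ℕ`) in which no two edges cross. -/
def IsOuterplanar {V : Type*} (G : SimpleGraph V) : Prop :=
  ∃ f : V → ℕ, Function.Injective f ∧
    ∀ u v x y, G.Adj u v → G.Adj x y → ¬(f u < f x ∧ f x < f v ∧ f v < f y)

/-- The derived graph of `G` on vertex set `V(G) ⊕ E(G)`. Black–white edges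
(`u`–`(uv)` for `u` an endpoint of the edge `uv`) are always present; `black` indicates
whether the original edges of `G` are retained, and `white` indicates whether two edge
vertices corresponding to adjacent edges of `G` (distinct edges sharing an endpoint)
are joined. -/
def derivedG {V : Type*} (G : SimpleGraph V) (black white : Bool) :
    SimpleGraph (V ⊕ G.edgeSet) where
  Adj x y :=
    match x, y with
    | Sum.inl u, Sum.inl v => black = true ∧ G.Adj u v
    | Sum.inl u, Sum.inr e => u ∈ (e : Sym2 V)
    | Sum.inr e, Sum.inl u => u ∈ (e : Sym2 V)
    | Sum.inr e, Sum.inr f =>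
        white = true ∧ e ≠ f ∧ ∃ w, w ∈ (e : Sym2 V) ∧ w ∈ (f : Sym2 V)
  symm := by
    refine ⟨?_⟩
    rintro (u | e) (v | f) h
    · exact ⟨h.1, h.2.symm⟩
    · exact h
    · exact h
    · obtain ⟨hw, hne, w, h1, h2⟩ := h
      exact ⟨hw, hne.symm, w, h2, h1⟩
  loopless := by
    refine ⟨?_⟩
    rintro (u | e) h
    · exact G.irrefl h.2
    · exact h.2.1 rfl

/-- The four graph operations `S`, `R`, `Q`, `T`. -/
inductive FOp : Type
  | S | R | Q | T
  deriving DecidableEq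

/-- Whether the operation retains the original (black–black) edges of `G`. -/
def FOp.black : FOp → Bool
  | .R => true
  | .T => true
  | _ => false

/-- Whether the operation joins edge (white) vertices of adjacent edges. -/
def FOp.white : FOp → Bool
  | .Q => true
  | .T => true
  | _ => false

/-- `FGraph F G` is the graph `F(G)` for `F ∈ {S, R, Q, T}`. -/
def FGraph (F : FOp) {V : Type*} (G : SimpleGraph V) : SimpleGraph (V ⊕ G.edgeSet) :=
  derivedG G F.black F.white

/-- The `F`-sum `G +_F H`: vertex set `(V(G) ∪ E(G)) × V(H)`; `(u₁, u₂)` and `(v₁, v₂)`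
are adjacent iff `u₁ = v₁ ∈ V(G)` and `u₂v₂ ∈ E(H)`, or `u₂ = v₂` and
`u₁v₁ ∈ E(F(G))`. -/
def FSum (F : FOp) {V W : Type*} (G : SimpleGraph V) (H : SimpleGraph W) :
    SimpleGraph ((V ⊕ G.edgeSet) × W) where
  Adj x y :=
    (x.1 = y.1 ∧ (∃ u : V, x.1 = Sum.inl u) ∧ H.Adj x.2 y.2) ∨
    (x.2 = y.2 ∧ (FGraph F G).Adj x.1 y.1)
  symm := by
    refine ⟨?_⟩
    rintro ⟨a, b⟩ ⟨c, d⟩ (⟨h1, h2, h3⟩ | ⟨h1, h2⟩)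
    · exact Or.inl ⟨h1.symm, h1 ▸ h2, h3.symm⟩
    · exact Or.inr ⟨h1.symm, h2.symm⟩
  loopless := by
    refine ⟨?_⟩
    rintro ⟨a, b⟩ (⟨-, -, h⟩ | ⟨-, h⟩)
    · exact H.irrefl h
    · exact (FGraph F G).irrefl h

/-- The path graph `P_n` on `n` vertices. -/
def pathG (n : ℕ) : SimpleGraph (Fin n) where
  Adj i j := (i : ℕ) + 1 = (j : ℕ) ∨ (j : ℕ) + 1 = (i : ℕ)
  symm := by refine ⟨?_⟩; intro i j h; tauto
  loopless := by refine ⟨?_⟩; intro i h; omega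

instance (n : ℕ) : DecidableRel (pathG n).Adj := fun i j =>
  inferInstanceAs (Decidable (_ ∨ _))

/-- The cycle graph `C_n` on `n` vertices (intended for `n ≥ 3`). -/
def cycleG (n : ℕ) : SimpleGraph (Fin n) where
  Adj i j := i ≠ j ∧ (((i : ℕ) + 1) % n = (j : ℕ) ∨ ((j : ℕ) + 1) % n = (i : ℕ))
  symm := by refine ⟨?_⟩; intro i j h; tauto
  loopless := by refine ⟨?_⟩; intro i h; exact h.1 rfl

instance (n : ℕ) : DecidableRel (cycleG n).Adj := fun i j =>
  inferInstanceAs (Decidable (_ ∧ _))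

/-- The star graph `S_n = K_{1,n}` on `n + 1` vertices: vertex `0` is the center. -/
def starG (n : ℕ) : SimpleGraph (Fin (n + 1)) where
  Adj i j := i ≠ j ∧ (i = 0 ∨ j = 0)
  symm := by refine ⟨?_⟩; intro i j h; tauto
  loopless := by refine ⟨?_⟩; intro i h; exact h.1 rfl

instance (n : ℕ) : DecidableRel (starG n).Adj := fun i j =>
  inferInstanceAs (Decidable (_ ∧ _))

/-- The circulant graph `C(ℤ_m, {1, 2})`: vertices `0, …, m - 1`, with `i` adjacent to
`j` iff `i - j ≡ ±1` or `±2 (mod m)`. -/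
def circulantG12 (m : ℕ) : SimpleGraph (Fin m) where
  Adj i j := i ≠ j ∧
    (((i : ℕ) + 1) % m = (j : ℕ) ∨ ((i : ℕ) + 2) % m = (j : ℕ) ∨
     ((j : ℕ) + 1) % m = (i : ℕ) ∨ ((j : ℕ) + 2) % m = (i : ℕ))
  symm := by refine ⟨?_⟩; intro i j h; tauto
  loopless := by refine ⟨?_⟩; intro i h; exact h.1 rfl


namespace StarQ

/-- Every finite graph has some MBE. -/
lemma exists_isMBE {V : Type*} [Fintype V] (G : SimpleGraph V) :
    ∃ k f page, IsMBE G k f page := by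
  classical
  refine ⟨Fintype.card (Sym2 V), fun v => (Fintype.equivFin V v : ℕ),
    fun z => (Fintype.equivFin (Sym2 V) z : ℕ), ?_, ?_, ?_, ?_⟩
  · intro a b h
    exact (Fintype.equivFin V).injective (Fin.ext h)
  · intro u v _; exact (Fintype.equivFin (Sym2 V) s(u,v)).isLt
  · intro u v x y _ _ hpg
    have h : s(u,v) = s(x,y) := (Fintype.equivFin (Sym2 V)).injective (Fin.ext hpg)
    rcases Sym2.eq_iff.1 h with ⟨rfl, rfl⟩ | ⟨rfl, rfl⟩
    · rintro ⟨h1, h2, h3⟩; omega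
    · rintro ⟨h1, h2, h3⟩; omega
  · intro u v w _ _ hvw hpg
    have h : s(u,v) = s(u,w) := (Fintype.equivFin (Sym2 V)).injective (Fin.ext hpg)
    rcases Sym2.eq_iff.1 h with ⟨-, rfl⟩ | ⟨rfl, rfl⟩ <;> exact hvw rfl

/-- In an MBE on `k` pages, every vertex has degree at most `k`. -/
lemma deg_le_of_isMBE {V : Type*} [Fintype V] (G : SimpleGraph V) {k : ℕ} {f : V → ℕ}
    {page : Sym2 V → ℕ} (h : IsMBE G k f page) (v : V) : deg G v ≤ k := by
  classical
  obtain ⟨-, hlt, -, hmatch⟩ := h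
  have : (G.neighborSet v).ncard ≤ (↑(Finset.range k) : Set ℕ).ncard := by
    refine Set.ncard_le_ncard_of_injOn (fun u => page s(v, u)) ?_ ?_ (Set.toFinite _)
    · intro u hu
      simp only [Finset.coe_range, Set.mem_Iio]
      exact hlt v u hu
    · intro a ha b hb hab
      by_contra hne
      exact hmatch v a b ha hb hne hab
  calc deg G v = (G.neighborSet v).ncard := rfl
    _ ≤ (↑(Finset.range k) : Set ℕ).ncard := this
    _ = k := by rw [Set.ncard_coe_finset, Finset.card_range]

/-- mbt is at least the max degree. -/
lemma maxDeg_le_mbt {V : Type*} [Fintype V] (G : SimpleGraph V) : maxDeg G ≤ mbt G := by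
  classical
  have hne : {k | ∃ f page, IsMBE G k f page}.Nonempty := by
    obtain ⟨k, f, page, h⟩ := exists_isMBE G
    exact ⟨k, f, page, h⟩
  refine le_csInf hne ?_
  rintro k ⟨f, page, h⟩
  refine Finset.sup_le fun v _ => deg_le_of_isMBE G h v

lemma mbt_le_of_isMBE {V : Type*} (G : SimpleGraph V) {k : ℕ} {f : V → ℕ}
    {page : Sym2 V → ℕ} (h : IsMBE G k f page) : mbt G ≤ k :=
  Nat.sInf_le ⟨f, page, h⟩

/-- Extract a witness MBE with exactly `mbt G` pages. -/
lemma exists_isMBE_mbt {V : Type*} [Fintype V] (G : SimpleGraph V) :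
    ∃ f page, IsMBE G (mbt G) f page := by
  have hne : {k | ∃ f page, IsMBE G k f page}.Nonempty := by
    obtain ⟨k, f, page, h⟩ := exists_isMBE G
    exact ⟨k, f, page, h⟩
  exact Nat.sInf_mem hne

end StarQ


namespace StarQ

variable {n : ℕ}

/-- The index of a star edge: the (value of the) nonzero endpoint. -/
def idx (e : (starG n).edgeSet) : ℕ :=
  Sym2.lift ⟨fun (a b : Fin (n+1)) => max a.val b.val, fun a b => max_comm _ _⟩ e.val

lemma star_adj {a b : Fin (n+1)} (h : (starG n).Adj a b) :
    (a = 0 ∧ b ≠ 0) ∨ (b = 0 ∧ a ≠ 0) := by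
  obtain ⟨hne, h0⟩ := h
  rcases h0 with rfl | rfl
  · exact Or.inl ⟨rfl, fun hb => hne hb.symm⟩
  · exact Or.inr ⟨rfl, hne⟩

lemma edge_eq (e : (starG n).edgeSet) :
    ∃ b : Fin (n+1), b ≠ 0 ∧ e.val = s(0, b) ∧ idx e = (b : ℕ) := by
  obtain ⟨e, he⟩ := e
  induction e with
  | _ a b =>
    rw [SimpleGraph.mem_edgeSet] at he
    rcases star_adj he with ⟨rfl, hb⟩ | ⟨rfl, ha⟩
    · refine ⟨b, hb, rfl, ?_⟩
      simp only [idx, Sym2.lift_mk, Fin.val_zero]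
      omega
    · refine ⟨a, ha, Sym2.eq_swap, ?_⟩
      simp only [idx, Sym2.lift_mk, Fin.val_zero]
      omega

lemma idx_pos (e : (starG n).edgeSet) : 1 ≤ idx e := by
  obtain ⟨b, hb, -, hidx⟩ := edge_eq e
  have : (b : ℕ) ≠ 0 := fun h => hb (Fin.ext h)
  omega

lemma idx_le (e : (starG n).edgeSet) : idx e ≤ n := by
  obtain ⟨b, -, -, hidx⟩ := edge_eq e
  have := b.isLt
  omega

lemma idx_inj {e f : (starG n).edgeSet} (h : idx e = idx f) : e = f := by
  obtain ⟨b, -, hb, hidxb⟩ := edge_eq e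
  obtain ⟨c, -, hc, hidxc⟩ := edge_eq f
  have : b = c := Fin.ext (by omega)
  exact Subtype.ext (by rw [hb, hc, this])

lemma zero_mem (e : (starG n).edgeSet) : (0 : Fin (n+1)) ∈ e.val := by
  obtain ⟨b, -, hb, -⟩ := edge_eq e
  rw [hb]; exact Sym2.mem_mk_left _ _

lemma mem_iff (e : (starG n).edgeSet) (u : Fin (n+1)) :
    u ∈ e.val ↔ (u = 0 ∨ (u : ℕ) = idx e) := by
  obtain ⟨b, hb0, hb, hidx⟩ := edge_eq e
  rw [hb, Sym2.mem_iff]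
  constructor
  · rintro (rfl | rfl)
    · exact Or.inl rfl
    · exact Or.inr hidx.symm
  · rintro (rfl | h)
    · exact Or.inl rfl
    · exact Or.inr (Fin.ext (by omega))

/-- The edge with given nonzero index. -/
def mkEdge (i : Fin (n+1)) (hi : i ≠ 0) : (starG n).edgeSet :=
  ⟨s(0, i), by rw [SimpleGraph.mem_edgeSet]; exact ⟨fun h => hi h.symm, Or.inl rfl⟩⟩

lemma idx_mkEdge (i : Fin (n+1)) (hi : i ≠ 0) : idx (mkEdge i hi) = (i : ℕ) := by
  simp [mkEdge, idx, Sym2.lift_mk]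

lemma card_edgeSet : Fintype.card (starG n).edgeSet = n := by
  classical
  have hbij : Function.Bijective (fun i : Fin n =>
      mkEdge (⟨(i : ℕ) + 1, by omega⟩ : Fin (n+1)) (by simp [Fin.ext_iff])) := by
    constructor
    · intro a b hab
      have := congrArg idx hab
      rw [idx_mkEdge, idx_mkEdge] at this
      simpa [Fin.ext_iff] using this
    · intro e
      obtain ⟨b, hb0, hbe, hidx⟩ := edge_eq e
      have hb1 : 1 ≤ (b : ℕ) := by
        have : (b : ℕ) ≠ 0 := fun h => hb0 (Fin.ext h); omega
      refine ⟨⟨(b : ℕ) - 1, by have := b.isLt; omega⟩, ?_⟩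
      apply idx_inj
      rw [idx_mkEdge, hidx]
      simp
      omega
  calc Fintype.card (starG n).edgeSet = Fintype.card (Fin n) :=
        (Fintype.card_of_bijective hbij).symm
    _ = n := Fintype.card_fin n

end StarQ

namespace StarQ

variable {n : ℕ} {W : Type*}

abbrev BV (n : ℕ) := Fin (n+1) ⊕ (starG n).edgeSet

lemma qadj_inl_inl {u v : Fin (n+1)} :
    ¬ (FGraph .Q (starG n)).Adj (Sum.inl u) (Sum.inl v) := by
  rintro ⟨h, -⟩
  exact Bool.false_ne_true h

lemma qadj_inl_inr {u : Fin (n+1)} {e : (starG n).edgeSet} :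
    (FGraph .Q (starG n)).Adj (Sum.inl u) (Sum.inr e) ↔ u ∈ e.val :=
  Iff.rfl

lemma qadj_inr_inl {u : Fin (n+1)} {e : (starG n).edgeSet} :
    (FGraph .Q (starG n)).Adj (Sum.inr e) (Sum.inl u) ↔ u ∈ e.val :=
  Iff.rfl

lemma qadj_inr_inr {e f : (starG n).edgeSet} :
    (FGraph .Q (starG n)).Adj (Sum.inr e) (Sum.inr f) ↔ e ≠ f := by
  constructor
  · rintro ⟨-, hne, -⟩; exact hne
  · intro hne
    exact ⟨rfl, hne, 0, zero_mem e, zero_mem f⟩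

lemma fsum_adj (H : SimpleGraph W) (x y : BV n × W) :
    (FSum .Q (starG n) H).Adj x y ↔
      (x.1 = y.1 ∧ (∃ u, x.1 = Sum.inl u) ∧ H.Adj x.2 y.2) ∨
      (x.2 = y.2 ∧ (FGraph .Q (starG n)).Adj x.1 y.1) :=
  Iff.rfl

end StarQ
namespace StarQ

variable {n : ℕ} {W : Type*}

lemma neighborSet_inl (H : SimpleGraph W) (u : Fin (n+1)) (w : W) :
    (FSum .Q (starG n) H).neighborSet (Sum.inl u, w) =
      ((fun w' => ((Sum.inl u : BV n), w')) '' H.neighborSet w) ∪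
      ((fun e => ((Sum.inr e : BV n), w)) '' {e | u ∈ e.val}) := by
  ext ⟨y1, y2⟩
  simp only [mem_neighborSet, fsum_adj, Set.mem_union, Set.mem_image,
    SimpleGraph.mem_neighborSet, Set.mem_setOf_eq]
  constructor
  · rintro (⟨h1, -, h3⟩ | ⟨h1, h2⟩)
    · exact Or.inl ⟨y2, h3, by rw [Prod.ext_iff]; exact ⟨h1, rfl⟩⟩
    · cases y1 with
      | inl v => exact absurd h2 qadj_inl_inl
      | inr e => exact Or.inr ⟨e, qadj_inl_inr.1 h2, by rw [Prod.ext_iff]; exact ⟨rfl, h1⟩⟩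
  · rintro (⟨w', hw', heq⟩ | ⟨e, he, heq⟩)
    · obtain ⟨h1, h2⟩ := Prod.mk.injEq .. ▸ heq
      exact Or.inl ⟨h1, ⟨u, rfl⟩, h2 ▸ hw'⟩
    · obtain ⟨h1, h2⟩ := Prod.mk.injEq .. ▸ heq
      subst h1 h2
      exact Or.inr ⟨rfl, qadj_inl_inr.2 he⟩

lemma neighborSet_inr (H : SimpleGraph W) (e : (starG n).edgeSet) (w : W) :
    (FSum .Q (starG n) H).neighborSet (Sum.inr e, w) =
      ((fun v => ((Sum.inl v : BV n), w)) '' {v | v ∈ e.val}) ∪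
      ((fun f => ((Sum.inr f : BV n), w)) '' {f | f ≠ e}) := by
  ext ⟨y1, y2⟩
  simp only [mem_neighborSet, fsum_adj, Set.mem_union, Set.mem_image, Set.mem_setOf_eq]
  constructor
  · rintro (⟨-, ⟨u, hu⟩, -⟩ | ⟨h1, h2⟩)
    · exact absurd hu (by simp)
    · cases y1 with
      | inl v => exact Or.inl ⟨v, qadj_inr_inl.1 h2, by rw [Prod.ext_iff]; exact ⟨rfl, h1⟩⟩
      | inr f => exact Or.inr ⟨f, (qadj_inr_inr.1 h2).symm, by rw [Prod.ext_iff]; exact ⟨rfl, h1⟩⟩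
  · rintro (⟨v, hv, heq⟩ | ⟨f, hf, heq⟩)
    · obtain ⟨h1, h2⟩ := Prod.mk.injEq .. ▸ heq
      subst h1 h2
      exact Or.inr ⟨rfl, qadj_inr_inl.2 hv⟩
    · obtain ⟨h1, h2⟩ := Prod.mk.injEq .. ▸ heq
      subst h1 h2
      exact Or.inr ⟨rfl, qadj_inr_inr.2 (Ne.symm hf)⟩

end StarQ
namespace StarQ

variable {n : ℕ} {W : Type*}

lemma ncard_pendantSet {u : Fin (n+1)} (hu : u ≠ 0) :
    ({e : (starG n).edgeSet | u ∈ e.val}).ncard = 1 := by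
  have : {e : (starG n).edgeSet | u ∈ e.val} = {mkEdge u hu} := by
    ext e
    simp only [Set.mem_setOf_eq, Set.mem_singleton_iff, mem_iff]
    constructor
    · rintro (rfl | h)
      · exact absurd rfl hu
      · exact (idx_inj (by rw [idx_mkEdge, ← h])).symm
    · rintro rfl
      exact Or.inr (idx_mkEdge u hu).symm
  rw [this, Set.ncard_singleton]

lemma ncard_allEdges : ({e : (starG n).edgeSet | (0 : Fin (n+1)) ∈ e.val}).ncard = n := by
  classical
  have : {e : (starG n).edgeSet | (0 : Fin (n+1)) ∈ e.val} = Set.univ := by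
    ext e; simp [zero_mem e]
  rw [this, Set.ncard_univ, Nat.card_eq_fintype_card, card_edgeSet]

lemma deg_fsum_inl [Fintype W] (H : SimpleGraph W) (u : Fin (n+1)) (w : W) :
    deg (FSum .Q (starG n) H) (Sum.inl u, w) = deg H w + (if u = 0 then n else 1) := by
  classical
  rw [deg, neighborSet_inl]
  rw [Set.ncard_union_eq]
  · congr 1
    · exact Set.ncard_image_of_injective _ (fun a b h => (Prod.mk.injEq .. ▸ h).2)
    · rw [Set.ncard_image_of_injective _
        (fun a b h => Sum.inr_injective (Prod.mk.injEq .. ▸ h).1)]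
      split
      · next h => subst h; exact ncard_allEdges
      · next h => exact ncard_pendantSet h
  · rw [Set.disjoint_left]
    rintro ⟨y1, y2⟩ ⟨w', -, heq⟩ ⟨e, -, heq2⟩
    rw [← heq2] at heq
    exact absurd (Prod.mk.injEq .. ▸ heq).1 (by simp)

lemma deg_fsum_inr [Fintype W] (H : SimpleGraph W) (e : (starG n).edgeSet) (w : W) :
    deg (FSum .Q (starG n) H) (Sum.inr e, w) ≤ n + 1 := by
  classical
  rw [deg, neighborSet_inr]
  calc _ ≤ ((fun v => ((Sum.inl v : BV n), w)) '' {v | v ∈ e.val}).ncard +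
        ((fun f => ((Sum.inr f : BV n), w)) '' {f | f ≠ e}).ncard := Set.ncard_union_le _ _
    _ ≤ 2 + (n - 1) := by
        gcongr
        · rw [Set.ncard_image_of_injective _
            (fun a b h => Sum.inl_injective (Prod.mk.injEq .. ▸ h).1)]
          have hsub : {v : Fin (n+1) | v ∈ e.val} ⊆ {0, ⟨idx e, by have := idx_le e; omega⟩} := by
            intro v hv
            rcases (mem_iff e v).1 hv with rfl | h
            · exact Set.mem_insert _ _
            · exact Set.mem_insert_iff.2 (Or.inr (by simp [Fin.ext_iff, h]))
          calc ({v : Fin (n+1) | v ∈ e.val}).ncard ≤ _ := Set.ncard_le_ncard hsub (Set.toFinite _)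
            _ ≤ 2 := by
              refine le_trans (Set.ncard_insert_le _ _) ?_
              simp
        · rw [Set.ncard_image_of_injective _
            (fun a b h => Sum.inr_injective (Prod.mk.injEq .. ▸ h).1)]
          have : {f : (starG n).edgeSet | f ≠ e} = Set.univ \ {e} := by
            ext f; simp
          rw [this, Set.ncard_diff (by simp) (Set.toFinite _), Set.ncard_univ,
            Nat.card_eq_fintype_card, card_edgeSet, Set.ncard_singleton]
    _ ≤ n + 1 := by
        have : 1 ≤ n ∨ n = 0 := by omega
        rcases this with h | h
        · omega
        · subst h
          -- n = 0 : no edges, contradiction-free bound: 2 + 0 ≤ 1 is false; handle separately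
          exfalso
          have := card_edgeSet (n := 0)
          have : (0 : Fin 1) ∈ e.val := zero_mem e
          have h1 := idx_pos e
          have h2 := idx_le e
          omega

lemma deg_H_le [Fintype W] (H : SimpleGraph W) (w : W) : deg H w ≤ maxDeg H :=
  Finset.le_sup (Finset.mem_univ w)

lemma maxDeg_fsum [Fintype W] (hn : 1 ≤ n) (H : SimpleGraph W) (hΔ : 1 ≤ maxDeg H) :
    maxDeg (FSum .Q (starG n) H) = n + maxDeg H := by
  classical
  have hWne : (Finset.univ : Finset W).Nonempty := by
    rw [Finset.nonempty_iff_ne_empty]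
    intro h
    rw [maxDeg, h, Finset.sup_empty] at hΔ
    exact absurd hΔ (by simp)
  obtain ⟨w0, -, hw0⟩ := Finset.exists_mem_eq_sup Finset.univ hWne (deg H)
  apply le_antisymm
  · refine Finset.sup_le ?_
    rintro ⟨x, w⟩ -
    cases x with
    | inl u =>
        rw [deg_fsum_inl]
        have := deg_H_le H w
        split <;> omega
    | inr e =>
        have := deg_fsum_inr H e w
        omega
  · calc n + maxDeg H = deg (FSum .Q (starG n) H) (Sum.inl 0, w0) := by
          rw [deg_fsum_inl, if_pos rfl, maxDeg, hw0]; omega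
      _ ≤ _ := Finset.le_sup (Finset.mem_univ _)

end StarQ
namespace StarQ

variable {n : ℕ} {W : Type*}

/-- offset of a block vertex within a (color-0) block: c ↦ 0, ℓ_i ↦ 2i, e_i ↦ 2i-1. -/
def off : BV n → ℕ
  | Sum.inl u => if u = 0 then 0 else 2 * (u : ℕ)
  | Sum.inr e => 2 * idx e - 1

/-- window base page of an original vertex: c ↦ n, ℓ_i ↦ i-1 (junk on edge vertices). -/
def nu : BV n → ℕ
  | Sum.inl u => if u = 0 then n else (u : ℕ) - 1
  | Sum.inr _ => 0

/-- page of the H-copy edge at `x` with H-page `r`. -/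
def gam (x : BV n) (r : ℕ) : ℕ := if r = 0 then nu x else n + r

/-- clique index: c ↦ 0, e_i ↦ i (junk = 0 on ℓ's). -/
def iota : BV n → ℕ
  | Sum.inl _ => 0
  | Sum.inr e => idx e

/-- page of a Q-edge. -/
def sqp : BV n → BV n → ℕ
  | Sum.inl u, Sum.inr e => if u = 0 then idx e - 1 else (2*(u:ℕ) - 1) % (n+1)
  | Sum.inr e, Sum.inl u => if u = 0 then idx e - 1 else (2*(u:ℕ) - 1) % (n+1)
  | Sum.inr e, Sum.inr f => (idx e + idx f - 1) % (n+1)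
  | Sum.inl _, Sum.inl _ => 0

lemma sqp_symm (x y : BV n) : sqp x y = sqp y x := by
  cases x <;> cases y <;> simp [sqp, Nat.add_comm]

open Classical in
/-- the global page assignment function on ordered pairs. -/
noncomputable def pf (pg : Sym2 W → ℕ) (a b : BV n × W) : ℕ :=
  if a.1 = b.1 then gam a.1 (pg s(a.2, b.2)) else if a.2 = b.2 then sqp a.1 b.1 else 0

lemma pf_symm (pg : Sym2 W → ℕ) (a b : BV n × W) : pf pg a b = pf pg b a := by
  unfold pf
  rcases eq_or_ne a.1 b.1 with h | h
  · rw [if_pos h, if_pos h.symm, h, Sym2.eq_swap]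
  · rw [if_neg h, if_neg (Ne.symm h)]
    rcases eq_or_ne a.2 b.2 with h2 | h2
    · rw [if_pos h2, if_pos h2.symm, sqp_symm]
    · rw [if_neg h2, if_neg (Ne.symm h2)]

/-- the page assignment. -/
noncomputable def pageF (pg : Sym2 W → ℕ) : Sym2 (BV n × W) → ℕ :=
  Sym2.lift ⟨pf pg, pf_symm pg⟩

lemma pageF_mk (pg : Sym2 W → ℕ) (a b : BV n × W) : pageF pg s(a, b) = pf pg a b :=
  Sym2.lift_mk ..

/-- the vertex order. -/
def posF (C : W → Fin 2) (f : W → ℕ) (z : BV n × W) : ℕ :=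
  (2*n+1) * f z.2 + (if C z.2 = 0 then off z.1 else 2*n - off z.1)

/-- within-block offset (with color reversal). -/
def oo (C : W → Fin 2) (z : BV n × W) : ℕ :=
  if C z.2 = 0 then off z.1 else 2*n - off z.1

lemma posF_eq (C : W → Fin 2) (f : W → ℕ) (z : BV n × W) :
    posF C f z = (2*n+1) * f z.2 + oo C z := rfl

lemma off_le (x : BV n) : off x ≤ 2*n := by
  cases x with
  | inl u => have := u.isLt; simp only [off]; split <;> omega
  | inr e => have := idx_le e; simp only [off]; omega

lemma oo_le (C : W → Fin 2) (z : BV n × W) : oo C z ≤ 2*n := by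
  unfold oo; have := off_le (n := n) z.1; split <;> omega

lemma off_inj : Function.Injective (off (n := n)) := by
  rintro (u | e) (v | f) h <;> simp only [off] at h
  · rcases eq_or_ne u 0 with rfl | hu <;> rcases eq_or_ne v 0 with rfl | hv
    · rfl
    · rw [if_pos rfl, if_neg hv] at h
      have : (v:ℕ) ≠ 0 := fun h' => hv (Fin.ext h'); omega
    · rw [if_neg hu, if_pos rfl] at h
      have : (u:ℕ) ≠ 0 := fun h' => hu (Fin.ext h'); omega
    · rw [if_neg hu, if_neg hv] at h
      exact congrArg Sum.inl (Fin.ext (by omega))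
  · exfalso
    have h1 := idx_pos f
    rcases eq_or_ne u 0 with rfl | hu
    · rw [if_pos rfl] at h; omega
    · rw [if_neg hu] at h; omega
  · exfalso
    have h1 := idx_pos e
    rcases eq_or_ne v 0 with rfl | hv
    · rw [if_pos rfl] at h; omega
    · rw [if_neg hv] at h; omega
  · have h1 := idx_pos e; have h2 := idx_pos f
    exact congrArg Sum.inr (idx_inj (by omega))

/-- block decomposition: strict comparison. -/
lemma block_lt {M a b r s : ℕ} (hr : r < M) (hs : s < M) (h : M*a + r < M*b + s) :
    a < b ∨ (a = b ∧ r < s) := by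
  rcases lt_trichotomy a b with h' | rfl | h'
  · exact Or.inl h'
  · exact Or.inr ⟨rfl, by omega⟩
  · exfalso
    have h2 : M * (b+1) ≤ M * a := Nat.mul_le_mul_left M h'
    rw [Nat.mul_succ] at h2
    omega

lemma block_lt' {M a b r s : ℕ} (hr : r < M) (h : a < b) : M*a + r < M*b + s := by
  have h2 : M * (a+1) ≤ M * b := Nat.mul_le_mul_left M h
  rw [Nat.mul_succ] at h2
  omega

lemma block_eq {M a b r s : ℕ} (hr : r < M) (hs : s < M) (h : M*a + r = M*b + s) :
    a = b ∧ r = s := by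
  rcases lt_trichotomy a b with h' | rfl | h'
  · exfalso; have h2 : M * (a+1) ≤ M * b := Nat.mul_le_mul_left M h'
    rw [Nat.mul_succ] at h2; omega
  · exact ⟨rfl, by omega⟩
  · exfalso; have h2 : M * (b+1) ≤ M * a := Nat.mul_le_mul_left M h'
    rw [Nat.mul_succ] at h2; omega

lemma posF_lt {C : W → Fin 2} {f : W → ℕ} {z z' : BV n × W}
    (h : posF C f z < posF C f z') : f z.2 < f z'.2 ∨ (f z.2 = f z'.2 ∧ oo C z < oo C z') := by
  rw [posF_eq, posF_eq] at h
  exact block_lt (by have := oo_le C z; omega) (by have := oo_le C z'; omega) h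

lemma posF_inj {C : W → Fin 2} {f : W → ℕ} (hf : Function.Injective f) :
    Function.Injective (posF (n := n) C f) := by
  intro z z' h
  rw [posF_eq, posF_eq] at h
  obtain ⟨h1, h2⟩ := block_eq (by have := oo_le C z; omega) (by have := oo_le C z'; omega) h
  have hw : z.2 = z'.2 := hf h1
  have : off z.1 = off z'.1 := by
    unfold oo at h2
    rw [hw] at h2
    have o1 := off_le (n := n) z.1
    have o2 := off_le (n := n) z'.1
    split at h2 <;> omega
  obtain ⟨a1, a2⟩ := z; obtain ⟨b1, b2⟩ := z'
  simp only at hw this ⊢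
  rw [hw, off_inj this]

/-- mod helper. -/
lemma mod_cases {x m : ℕ} (h : x < 2*m) :
    (x % m = x ∧ x < m) ∨ (x % m = x - m ∧ m ≤ x) := by
  rcases lt_or_ge x m with h' | h'
  · exact Or.inl ⟨Nat.mod_eq_of_lt h', h'⟩
  · refine Or.inr ⟨?_, h'⟩
    rw [Nat.mod_eq_sub_mod h', Nat.mod_eq_of_lt (by omega)]

end StarQ
namespace StarQ

variable {n : ℕ} {W : Type*}

lemma sqp_inl_inr (u : Fin (n+1)) (e : (starG n).edgeSet) :
    sqp (Sum.inl u : BV n) (Sum.inr e) = if u = 0 then idx e - 1 else (2*(u:ℕ) - 1) % (n+1) := rfl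

lemma sqp_inr_inl (u : Fin (n+1)) (e : (starG n).edgeSet) :
    sqp (Sum.inr e : BV n) (Sum.inl u) = if u = 0 then idx e - 1 else (2*(u:ℕ) - 1) % (n+1) := rfl

lemma sqp_inr_inr (e f : (starG n).edgeSet) :
    sqp (Sum.inr e : BV n) (Sum.inr f) = (idx e + idx f - 1) % (n+1) := rfl

lemma nu_inl (u : Fin (n+1)) : nu (Sum.inl u : BV n) = if u = 0 then n else (u:ℕ) - 1 := rfl

lemma gam_eq (x : BV n) (r : ℕ) : gam x r = if r = 0 then nu x else n + r := rfl

lemma off_inl (u : Fin (n+1)) : off (Sum.inl u : BV n) = if u = 0 then 0 else 2*(u:ℕ) := rfl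

lemma off_inr (e : (starG n).edgeSet) : off (Sum.inr e : BV n) = 2 * idx e - 1 := rfl

lemma iota_inl (u : Fin (n+1)) : iota (Sum.inl u : BV n) = 0 := rfl

lemma iota_inr (e : (starG n).edgeSet) : iota (Sum.inr e : BV n) = idx e := rfl

lemma nu_le (x : BV n) : nu x ≤ n := by
  cases x with
  | inl u => have := u.isLt; rw [nu_inl]; split <;> omega
  | inr e => simp [nu]

lemma sqp_le (x y : BV n) : sqp x y ≤ n := by
  have h2 : ∀ (u : Fin (n+1)) (e : (starG n).edgeSet),
      (if u = 0 then idx e - 1 else (2*(u:ℕ) - 1) % (n+1)) ≤ n := by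
    intro u e
    have := idx_le e
    have := Nat.mod_lt (2*(u:ℕ) - 1) (y := n+1) (by omega)
    split <;> omega
  cases x with
  | inl u => cases y with
    | inl v => simp [sqp]
    | inr e => rw [sqp_inl_inr]; exact h2 u e
  | inr e => cases y with
    | inl u => rw [sqp_inr_inl]; exact h2 u e
    | inr f =>
      have := Nat.mod_lt (idx e + idx f - 1) (y := n+1) (by omega)
      rw [sqp_inr_inr]; omega

lemma gam_inj {x : BV n} {r r' : ℕ} (h : r ≠ r') : gam x r ≠ gam x r' := by
  have := nu_le x
  rw [gam_eq, gam_eq]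
  rcases eq_or_ne r 0 with rfl | hr <;> rcases eq_or_ne r' 0 with rfl | hr'
  · omega
  · rw [if_pos rfl, if_neg hr']; omega
  · rw [if_neg hr, if_pos rfl]; omega
  · rw [if_neg hr, if_neg hr']; omega

lemma pend_ne_window {i : ℕ} (h1 : 1 ≤ i) (h2 : i ≤ n) : (2*i - 1) % (n+1) ≠ i - 1 := by
  rcases mod_cases (x := 2*i-1) (m := n+1) (by omega) with ⟨he, hb⟩ | ⟨he, hb⟩ <;> omega

lemma val_eq_idx {u : Fin (n+1)} {e : (starG n).edgeSet} (hue : u ∈ e.val) (hu : u ≠ 0) :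
    (u : ℕ) = idx e := ((mem_iff e u).1 hue).resolve_left hu

lemma u_pos {u : Fin (n+1)} (hu : u ≠ 0) : 1 ≤ (u : ℕ) := by
  have : (u:ℕ) ≠ 0 := fun h' => hu (Fin.ext h'); omega

lemma gam_ne_sqp {u : Fin (n+1)} {e : (starG n).edgeSet} (hue : u ∈ e.val) (r : ℕ) :
    gam (Sum.inl u : BV n) r ≠ sqp (Sum.inl u) (Sum.inr e) := by
  have hie1 := idx_pos e
  have hie2 := idx_le e
  have hle := sqp_le (Sum.inl u : BV n) (Sum.inr e)
  rw [gam_eq, sqp_inl_inr] at *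
  rcases eq_or_ne r 0 with rfl | hr
  · rw [if_pos rfl, nu_inl]
    rcases eq_or_ne u 0 with rfl | hu
    · rw [if_pos rfl, if_pos rfl]; omega
    · rw [if_neg hu, if_neg hu]
      have hval := val_eq_idx hue hu
      have := pend_ne_window (n := n) (i := (u:ℕ)) (u_pos hu) (by omega)
      omega
  · rw [if_neg hr]
    omega

lemma sqp_ne {x y1 y2 : BV n} (hq1 : (FGraph .Q (starG n)).Adj x y1)
    (hq2 : (FGraph .Q (starG n)).Adj x y2) (hy : y1 ≠ y2) : sqp x y1 ≠ sqp x y2 := by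
  cases x with
  | inl u =>
    cases y1 with
    | inl v => exact absurd hq1 qadj_inl_inl
    | inr e =>
      cases y2 with
      | inl v => exact absurd hq2 qadj_inl_inl
      | inr f =>
        have hef : e ≠ f := fun h => hy (by rw [h])
        have h1m : u ∈ e.val := qadj_inl_inr.1 hq1
        have h2m : u ∈ f.val := qadj_inl_inr.1 hq2
        have hie := idx_pos e; have hie' := idx_le e
        have hif := idx_pos f; have hif' := idx_le f
        have hij : idx e ≠ idx f := fun h => hef (idx_inj h)
        rw [sqp_inl_inr, sqp_inl_inr]
        rcases eq_or_ne u 0 with rfl | hu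
        · rw [if_pos rfl, if_pos rfl]; omega
        · exact absurd (val_eq_idx h1m hu ▸ val_eq_idx h2m hu) hij
  | inr e =>
    have hie := idx_pos e; have hie' := idx_le e
    cases y1 with
    | inl u =>
      have h1m : u ∈ e.val := qadj_inr_inl.1 hq1
      cases y2 with
      | inl v =>
        have h2m : v ∈ e.val := qadj_inr_inl.1 hq2
        have huv : u ≠ v := fun h => hy (by rw [h])
        rw [sqp_inr_inl, sqp_inr_inl]
        rcases eq_or_ne u 0 with rfl | hu <;> rcases eq_or_ne v 0 with rfl | hv
        · exact absurd rfl huv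
        · rw [if_pos rfl, if_neg hv]
          have hv2 := val_eq_idx h2m hv
          have := pend_ne_window (n := n) (i := (v:ℕ)) (u_pos hv) (by have := v.isLt; omega)
          omega
        · rw [if_neg hu, if_pos rfl]
          have hu2 := val_eq_idx h1m hu
          have := pend_ne_window (n := n) (i := (u:ℕ)) (u_pos hu) (by have := u.isLt; omega)
          omega
        · exact absurd (Fin.ext ((val_eq_idx h1m hu).trans (val_eq_idx h2m hv).symm)) huv
      | inr f2 =>
        have hef2 : e ≠ f2 := qadj_inr_inr.1 hq2
        have hif2 := idx_pos f2; have hif2' := idx_le f2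
        have hij : idx e ≠ idx f2 := fun h => hef2 (idx_inj h)
        rw [sqp_inr_inl, sqp_inr_inr]
        rcases eq_or_ne u 0 with rfl | hu
        · rw [if_pos rfl]
          rcases mod_cases (x := idx e + idx f2 - 1) (m := n+1) (by omega) with ⟨he, hb⟩ | ⟨he, hb⟩ <;> omega
        · rw [if_neg hu]
          have hu2 := val_eq_idx h1m hu
          rcases mod_cases (x := 2*(u:ℕ) - 1) (m := n+1) (by have := u.isLt; omega) with ⟨he, hb⟩ | ⟨he, hb⟩ <;>
            rcases mod_cases (x := idx e + idx f2 - 1) (m := n+1) (by omega) with ⟨he2, hb2⟩ | ⟨he2, hb2⟩ <;> omega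
    | inr f1 =>
      have hef1 : e ≠ f1 := qadj_inr_inr.1 hq1
      have hif1 := idx_pos f1; have hif1' := idx_le f1
      have hij1 : idx e ≠ idx f1 := fun h => hef1 (idx_inj h)
      cases y2 with
      | inl u =>
        have h2m : u ∈ e.val := qadj_inr_inl.1 hq2
        rw [sqp_inr_inr, sqp_inr_inl]
        rcases eq_or_ne u 0 with rfl | hu
        · rw [if_pos rfl]
          rcases mod_cases (x := idx e + idx f1 - 1) (m := n+1) (by omega) with ⟨he, hb⟩ | ⟨he, hb⟩ <;> omega
        · rw [if_neg hu]
          have hu2 := val_eq_idx h2m hu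
          rcases mod_cases (x := 2*(u:ℕ) - 1) (m := n+1) (by have := u.isLt; omega) with ⟨he, hb⟩ | ⟨he, hb⟩ <;>
            rcases mod_cases (x := idx e + idx f1 - 1) (m := n+1) (by omega) with ⟨he2, hb2⟩ | ⟨he2, hb2⟩ <;> omega
      | inr f2 =>
        have hf12 : f1 ≠ f2 := fun h => hy (by rw [h])
        have hif2 := idx_pos f2; have hif2' := idx_le f2
        have hij : idx f1 ≠ idx f2 := fun h => hf12 (idx_inj h)
        rw [sqp_inr_inr, sqp_inr_inr]
        rcases mod_cases (x := idx e + idx f1 - 1) (m := n+1) (by omega) with ⟨he, hb⟩ | ⟨he, hb⟩ <;>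
          rcases mod_cases (x := idx e + idx f2 - 1) (m := n+1) (by omega) with ⟨he2, hb2⟩ | ⟨he2, hb2⟩ <;> omega

lemma pf_H (pg : Sym2 W → ℕ) (x : BV n) (w w' : W) :
    pf pg (x, w) (x, w') = gam x (pg s(w, w')) := by
  simp [pf]

lemma pf_Q (pg : Sym2 W → ℕ) {x y : BV n} (hxy : x ≠ y) (w : W) :
    pf pg (x, w) (y, w) = sqp x y := by
  simp [pf, hxy]

lemma adj_cases (H : SimpleGraph W) {x y1 : BV n} {w w1 : W}
    (h : (FSum .Q (starG n) H).Adj (x, w) (y1, w1)) :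
    (y1 = x ∧ (∃ u : Fin (n+1), x = Sum.inl u) ∧ H.Adj w w1) ∨
    (w1 = w ∧ (FGraph .Q (starG n)).Adj x y1) := by
  rcases (fsum_adj H _ _).1 h with ⟨h1, h2, h3⟩ | ⟨h1, h2⟩
  · exact Or.inl ⟨h1.symm, h2, h3⟩
  · exact Or.inr ⟨h1.symm, h2⟩

lemma matching_cond (H : SimpleGraph W) (f : W → ℕ) (pg : Sym2 W → ℕ) (d : ℕ)
    (hH : IsMBE H d f pg) :
    ∀ (z z1 z2 : BV n × W), (FSum .Q (starG n) H).Adj z z1 → (FSum .Q (starG n) H).Adj z z2 →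
      z1 ≠ z2 → pageF pg s(z, z1) ≠ pageF pg s(z, z2) := by
  obtain ⟨-, -, -, hH4⟩ := hH
  rintro ⟨x, w⟩ ⟨y1, w1⟩ ⟨y2, w2⟩ h1 h2 hne
  rw [pageF_mk, pageF_mk]
  rcases adj_cases H h1 with ⟨rfl, hu1, ha1⟩ | ⟨rfl, hq1⟩ <;>
    rcases adj_cases H h2 with ⟨rfl, hu2, ha2⟩ | ⟨rfl, hq2⟩
  · -- H, H
    rw [pf_H, pf_H]
    have hww : w1 ≠ w2 := fun h => hne (by rw [h])
    exact gam_inj (hH4 w w1 w2 ha1 ha2 hww)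
  · -- H, Q
    rw [pf_H, pf_Q pg hq2.ne _]
    obtain ⟨u, rfl⟩ := hu1
    cases y2 with
    | inl v => exact absurd hq2 qadj_inl_inl
    | inr e => exact gam_ne_sqp (qadj_inl_inr.1 hq2) _
  · -- Q, H
    rw [pf_Q pg hq1.ne _, pf_H]
    obtain ⟨u, rfl⟩ := hu2
    cases y1 with
    | inl v => exact absurd hq1 qadj_inl_inl
    | inr e => exact (gam_ne_sqp (qadj_inl_inr.1 hq1) _).symm
  · -- Q, Q
    rw [pf_Q pg hq1.ne _, pf_Q pg hq2.ne _]
    have hy : y1 ≠ y2 := fun h => hne (by rw [h])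
    exact sqp_ne hq1 hq2 hy

end StarQ
namespace StarQ

variable {n : ℕ} {W : Type*}

/-- Every Q-edge is either a pendant (adjacent offsets) or a clique edge with
indices `i ≠ j` and page `(i+j-1) % (n+1)`. -/
lemma qedge_shape {x y : BV n} (h : (FGraph .Q (starG n)).Adj x y) :
    (off x = off y + 1 ∨ off y = off x + 1) ∨
    (∃ i j : ℕ, i ≠ j ∧ i ≤ n ∧ j ≤ n ∧ 1 ≤ i + j ∧
      ((i = 0 ∧ off x = 0) ∨ (1 ≤ i ∧ off x = 2*i - 1)) ∧
      ((j = 0 ∧ off y = 0) ∨ (1 ≤ j ∧ off y = 2*j - 1)) ∧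
      sqp x y = (i + j - 1) % (n+1)) := by
  cases x with
  | inl u =>
    cases y with
    | inl v => exact absurd h qadj_inl_inl
    | inr e =>
      have hm : u ∈ e.val := qadj_inl_inr.1 h
      have hie := idx_pos e; have hie' := idx_le e
      rcases eq_or_ne u 0 with rfl | hu
      · refine Or.inr ⟨0, idx e, by omega, by omega, hie', by omega, ?_, ?_, ?_⟩
        · exact Or.inl ⟨rfl, by rw [off_inl, if_pos rfl]⟩
        · exact Or.inr ⟨hie, by rw [off_inr]⟩
        · rw [sqp_inl_inr, if_pos rfl]
          have := Nat.mod_eq_of_lt (a := 0 + idx e - 1) (b := n+1) (by omega)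
          omega
      · left
        have hv := val_eq_idx hm hu
        have hu1 := u_pos hu
        rw [off_inl, if_neg hu, off_inr]
        omega
  | inr e =>
    have hie := idx_pos e; have hie' := idx_le e
    cases y with
    | inl u =>
      have hm : u ∈ e.val := qadj_inr_inl.1 h
      rcases eq_or_ne u 0 with rfl | hu
      · refine Or.inr ⟨idx e, 0, by omega, hie', by omega, by omega, ?_, ?_, ?_⟩
        · exact Or.inr ⟨hie, by rw [off_inr]⟩
        · exact Or.inl ⟨rfl, by rw [off_inl, if_pos rfl]⟩
        · rw [sqp_inr_inl, if_pos rfl]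
          have := Nat.mod_eq_of_lt (a := idx e + 0 - 1) (b := n+1) (by omega)
          omega
      · left
        have hv := val_eq_idx hm hu
        have hu1 := u_pos hu
        rw [off_inl, if_neg hu, off_inr]
        omega
    | inr f =>
      have hif := idx_pos f; have hif' := idx_le f
      have hef : e ≠ f := qadj_inr_inr.1 h
      refine Or.inr ⟨idx e, idx f, fun hh => hef (idx_inj hh), hie', hif', by omega, ?_, ?_, ?_⟩
      · exact Or.inr ⟨hie, by rw [off_inr]⟩
      · exact Or.inr ⟨hif, by rw [off_inr]⟩
      · rw [sqp_inr_inr]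

/-- Two same-page Q-edges in a common block never interleave (in offsets). -/
lemma qq_nocross {x1 y1 x2 y2 : BV n} (h1 : (FGraph .Q (starG n)).Adj x1 y1)
    (h2 : (FGraph .Q (starG n)).Adj x2 y2) (hpg : sqp x1 y1 = sqp x2 y2) :
    ¬(off x1 < off x2 ∧ off x2 < off y1 ∧ off y1 < off y2) := by
  rintro ⟨c1, c2, c3⟩
  rcases qedge_shape h1 with hp1 | ⟨i1, j1, hij1, hi1, hj1, hb1, ha1, hc1, hs1⟩
  · omega
  rcases qedge_shape h2 with hp2 | ⟨i2, j2, hij2, hi2, hj2, hb2, ha2, hc2, hs2⟩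
  · omega
  rw [hs1, hs2] at hpg
  rcases mod_cases (x := i1+j1-1) (m := n+1) (by omega) with ⟨he1, hm1⟩ | ⟨he1, hm1⟩ <;>
    rcases mod_cases (x := i2+j2-1) (m := n+1) (by omega) with ⟨he2, hm2⟩ | ⟨he2, hm2⟩ <;>
    rcases ha1 with ha1 | ha1 <;> rcases hc1 with hc1 | hc1 <;>
    rcases ha2 with ha2 | ha2 <;> rcases hc2 with hc2 | hc2 <;> omega

/-- A Q-edge on the window page of an original vertex `u` never straddles `u`. -/
lemma no_straddle {x y : BV n} (h : (FGraph .Q (starG n)).Adj x y) (u : Fin (n+1)) (r : ℕ)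
    (hpage : sqp x y = gam (Sum.inl u) r) :
    ¬(off x < off (Sum.inl u : BV n) ∧ off (Sum.inl u : BV n) < off y) := by
  rintro ⟨c1, c2⟩
  rcases qedge_shape h with hp | ⟨i, j, hij, hi, hj, hb, ha, hc, hs⟩
  · omega
  rw [hs, gam_eq] at hpage
  rcases eq_or_ne r 0 with rfl | hr
  · rw [if_pos rfl, nu_inl] at hpage
    rcases eq_or_ne u 0 with rfl | hu
    · rw [off_inl, if_pos rfl] at c1 c2
      omega
    · rw [if_neg hu] at hpage
      rw [off_inl, if_neg hu] at c1 c2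
      have hu1 := u_pos hu
      have := u.isLt
      rcases mod_cases (x := i+j-1) (m := n+1) (by omega) with ⟨he, hm⟩ | ⟨he, hm⟩ <;>
        rcases ha with ha | ha <;> rcases hc with hc | hc <;> omega
  · rw [if_neg hr] at hpage
    have := Nat.mod_lt (i+j-1) (y := n+1) (by omega)
    omega

end StarQ
namespace StarQ

variable {n : ℕ} {W : Type*}

lemma pos_le_f {C : W → Fin 2} {f : W → ℕ} {z z' : BV n × W}
    (h : posF C f z < posF C f z') : f z.2 ≤ f z'.2 := by
  rcases posF_lt h with h' | ⟨h', -⟩ <;> omega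

lemma pos_oo {C : W → Fin 2} {f : W → ℕ} {z z' : BV n × W} (hw : z.2 = z'.2)
    (h : posF C f z < posF C f z') : oo C z < oo C z' := by
  rcases posF_lt h with h' | ⟨-, h'⟩
  · rw [hw] at h'; omega
  · exact h'

lemma oo_mk (C : W → Fin 2) (x1 : BV n) (w : W) :
    oo C (x1, w) = if C w = 0 then off x1 else 2*n - off x1 := rfl

lemma gam_eq_gam {x x' : BV n} {r r' : ℕ} (h : gam x r = gam x' r') : r = r' := by
  have := nu_le x; have := nu_le x'
  rw [gam_eq, gam_eq] at h
  rcases eq_or_ne r 0 with rfl | hr <;> rcases eq_or_ne r' 0 with rfl | hr'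
  · rfl
  · rw [if_pos rfl, if_neg hr'] at h; omega
  · rw [if_neg hr, if_pos rfl] at h; omega
  · rw [if_neg hr, if_neg hr'] at h; omega

lemma fin2_cases {a b : Fin 2} (h : a ≠ b) (ha : a ≠ 0) : b = 0 := by
  fin_cases a <;> fin_cases b <;> simp_all

lemma cross_cond (H : SimpleGraph W) (C : W → Fin 2)
    (hC : ∀ w w', H.Adj w w' → C w ≠ C w')
    (f : W → ℕ) (hf : Function.Injective f) (pg : Sym2 W → ℕ) (d : ℕ)
    (hH : IsMBE H d f pg) :
    ∀ (a b x y : BV n × W), (FSum .Q (starG n) H).Adj a b → (FSum .Q (starG n) H).Adj x y →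
      pageF pg s(a, b) = pageF pg s(x, y) →
      ¬(posF C f a < posF C f x ∧ posF C f x < posF C f b ∧ posF C f b < posF C f y) := by
  obtain ⟨-, -, hH3, hH4⟩ := hH
  rintro ⟨a1, wa⟩ ⟨b1, wb⟩ ⟨x1, wx⟩ ⟨y1, wy⟩ hab hxy hpg ⟨c1, c2, c3⟩
  rw [pageF_mk, pageF_mk] at hpg
  rcases adj_cases H hab with ⟨rfl, ⟨u, rfl⟩, haH⟩ | ⟨rfl, haQ⟩ <;>
    rcases adj_cases H hxy with ⟨rfl, ⟨u', rfl⟩, hxH⟩ | ⟨rfl, hxQ⟩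
  · -- H, H
    rw [pf_H, pf_H] at hpg
    have hr := gam_eq_gam hpg
    rcases eq_or_ne (s(wa, wb) : Sym2 W) s(wx, wy) with he | he
    · rcases Sym2.eq_iff.1 he with ⟨h1, h2⟩ | ⟨h1, h2⟩
      · -- wx = wa, wy = wb
        subst h1; subst h2
        have o1 := pos_oo (z := (Sum.inl u, wa)) (z' := (Sum.inl u', wa)) rfl c1
        have o2 := pos_oo (z := (Sum.inl u, wb)) (z' := (Sum.inl u', wb)) rfl c3
        have hcol := hC wa wb haH
        rw [oo_mk, oo_mk] at o1 o2
        have l1 := off_le (n := n) (Sum.inl u); have l2 := off_le (n := n) (Sum.inl u')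
        rcases eq_or_ne (C wa) 0 with h0 | h0
        · have hb0 : C wb ≠ 0 := fun hh => hcol (h0.trans hh.symm)
          rw [if_pos h0, if_pos h0] at o1
          rw [if_neg hb0, if_neg hb0] at o2
          omega
        · have hb0 : C wb = 0 := fin2_cases hcol h0
          rw [if_neg h0, if_neg h0] at o1
          rw [if_pos hb0, if_pos hb0] at o2
          omega
      · -- wa = wy, wb = wx
        subst h1; subst h2
        have f1 := pos_le_f c1
        have f2 := pos_le_f c3
        simp only at f1 f2
        exact haH.ne (hf (le_antisymm f1 f2))
    · -- different H edges, same page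
      have fab := pos_le_f c1
      have fxb := pos_le_f c2
      have fby := pos_le_f c3
      simp only at fab fxb fby
      have hax : f wa ≠ f wx := by
        intro hfe
        have hww : wa = wx := hf hfe
        subst hww
        rcases eq_or_ne wb wy with rfl | hby
        · exact he rfl
        · exact hH4 wa wb wy haH hxH hby hr
      have hxb : f wx ≠ f wb := by
        intro hfe
        have hww : wx = wb := hf hfe
        subst hww
        rcases eq_or_ne wa wy with rfl | hay
        · exact haH.ne (hf (le_antisymm fab fby))
        · refine hH4 wx wa wy haH.symm hxH hay ?_
          rw [show (s(wx, wa) : Sym2 W) = s(wa, wx) from Sym2.eq_swap]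
          exact hr
      have hby' : f wb ≠ f wy := by
        intro hfe
        have hww : wb = wy := hf hfe
        subst hww
        rcases eq_or_ne wa wx with rfl | hax'
        · exact he rfl
        · refine hH4 wb wa wx haH.symm hxH.symm hax' ?_
          rw [show (s(wb, wa) : Sym2 W) = s(wa, wb) from Sym2.eq_swap,
            show (s(wb, wx) : Sym2 W) = s(wx, wb) from Sym2.eq_swap]
          exact hr
      exact hH3 wa wb wx wy haH hxH hr ⟨by omega, by omega, by omega⟩
  · -- H, Q : A is an H-edge at u in blocks wa→wb, B is a Q-edge in block wy
    rw [pf_H, pf_Q pg hxQ.ne _] at hpg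
    have f1 := pos_le_f c2
    have f2 := pos_le_f c3
    simp only at f1 f2
    obtain rfl : wy = wb := hf (le_antisymm f1 f2)
    have o1 := pos_oo (z := (x1, wy)) (z' := (Sum.inl u, wy)) rfl c2
    have o2 := pos_oo (z := (Sum.inl u, wy)) (z' := (y1, wy)) rfl c3
    rw [oo_mk, oo_mk] at o1 o2
    have l1 := off_le (n := n) x1
    have l2 := off_le (n := n) y1
    have l3 := off_le (n := n) (Sum.inl u)
    rcases eq_or_ne (C wy) 0 with h0 | h0
    · rw [if_pos h0, if_pos h0] at o1 o2
      exact no_straddle hxQ u _ hpg.symm ⟨o1, o2⟩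
    · rw [if_neg h0, if_neg h0] at o1 o2
      refine no_straddle hxQ.symm u (pg s(wa, wy)) ?_ ⟨by omega, by omega⟩
      rw [sqp_symm]
      exact hpg.symm
  · -- Q, H : A is a Q-edge in block wb, B is an H-edge at u' in blocks wx→wy
    rw [pf_Q pg haQ.ne _, pf_H] at hpg
    have f1 := pos_le_f c1
    have f2 := pos_le_f c2
    simp only at f1 f2
    obtain rfl : wx = wb := hf (le_antisymm f2 f1)
    have o1 := pos_oo (z := (a1, wx)) (z' := (Sum.inl u', wx)) rfl c1
    have o2 := pos_oo (z := (Sum.inl u', wx)) (z' := (b1, wx)) rfl c2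
    rw [oo_mk, oo_mk] at o1 o2
    have l1 := off_le (n := n) a1
    have l2 := off_le (n := n) b1
    have l3 := off_le (n := n) (Sum.inl u')
    rcases eq_or_ne (C wx) 0 with h0 | h0
    · rw [if_pos h0, if_pos h0] at o1 o2
      exact no_straddle haQ u' _ hpg ⟨o1, o2⟩
    · rw [if_neg h0, if_neg h0] at o1 o2
      refine no_straddle haQ.symm u' (pg s(wx, wy)) ?_ ⟨by omega, by omega⟩
      rw [sqp_symm]
      exact hpg
  · -- Q, Q : blocks wb and wy
    rw [pf_Q pg haQ.ne _, pf_Q pg hxQ.ne _] at hpg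
    have f1 := pos_le_f c1
    have f2 := pos_le_f c2
    simp only at f1 f2
    obtain rfl : wy = wb := hf (le_antisymm f2 f1)
    have o1 := pos_oo (z := (a1, wy)) (z' := (x1, wy)) rfl c1
    have o2 := pos_oo (z := (x1, wy)) (z' := (b1, wy)) rfl c2
    have o3 := pos_oo (z := (b1, wy)) (z' := (y1, wy)) rfl c3
    rw [oo_mk, oo_mk] at o1 o2 o3
    have l1 := off_le (n := n) a1
    have l2 := off_le (n := n) b1
    have l3 := off_le (n := n) x1
    have l4 := off_le (n := n) y1
    rcases eq_or_ne (C wy) 0 with h0 | h0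
    · rw [if_pos h0, if_pos h0] at o1 o2 o3
      exact qq_nocross haQ hxQ hpg ⟨o1, o2, o3⟩
    · rw [if_neg h0, if_neg h0] at o1 o2 o3
      refine qq_nocross hxQ.symm haQ.symm ?_ ⟨by omega, by omega, by omega⟩
      rw [sqp_symm, show sqp b1 a1 = sqp a1 b1 from sqp_symm b1 a1]
      exact hpg.symm
  done

end StarQ
namespace StarQ

variable {n : ℕ} {W : Type*}

lemma page_lt (H : SimpleGraph W) (pg : Sym2 W → ℕ) (d : ℕ) (hd : 1 ≤ d)
    (hpg : ∀ u v, H.Adj u v → pg s(u, v) < d) :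
    ∀ a b : BV n × W, (FSum .Q (starG n) H).Adj a b → pageF pg s(a, b) < n + d := by
  rintro ⟨a1, wa⟩ ⟨b1, wb⟩ hab
  rw [pageF_mk]
  rcases adj_cases H hab with ⟨rfl, ⟨u, rfl⟩, haH⟩ | ⟨rfl, haQ⟩
  · rw [pf_H]
    have h1 := hpg wa wb haH
    have h2 := nu_le (Sum.inl u : BV n)
    rw [gam_eq]
    split <;> omega
  · rw [pf_Q pg haQ.ne _]
    have := sqp_le a1 b1
    omega

lemma isMBE_fsum (H : SimpleGraph W) (C : W → Fin 2)
    (hC : ∀ w w', H.Adj w w' → C w ≠ C w')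
    (f : W → ℕ) (hf : Function.Injective f) (pg : Sym2 W → ℕ) (d : ℕ) (hd : 1 ≤ d)
    (hH : IsMBE H d f pg) :
    IsMBE (FSum .Q (starG n) H) (n + d) (posF C f) (pageF pg) := by
  refine ⟨posF_inj hf, ?_, ?_, ?_⟩
  · intro u v huv
    exact page_lt H pg d hd hH.2.1 u v huv
  · intro a b x y hab hxy hpg'
    exact cross_cond H C hC f hf pg d hH a b x y hab hxy hpg'
  · intro z z1 z2 h1 h2 hne
    exact matching_cond H f pg d hH z z1 z2 h1 h2 hne

end StarQ
/-- For `n ≥ 1` and any finite dispersable bipartite graph `H` with at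
least one edge, `S_n +_Q H` is dispersable, with
`mbt(S_n +_Q H) = Δ(S_n +_Q H) = n + Δ(H)`. -/
theorem star_QSum_dispersable (n : ℕ) (hn : 1 ≤ n) {W : Type*} [Fintype W]
    (H : SimpleGraph W) (hHE : H.edgeSet.Nonempty)
    (hbip : H.Colorable 2) (hdisp : mbt H = maxDeg H) (hΔ : 1 ≤ maxDeg H) :
    mbt (FSum .Q (starG n) H) = maxDeg (FSum .Q (starG n) H) ∧
      maxDeg (FSum .Q (starG n) H) = n + maxDeg H := by
  classical
  obtain ⟨f, pg, hH⟩ := StarQ.exists_isMBE_mbt H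
  rw [hdisp] at hH
  have C : H.Coloring (Fin 2) := hbip.some
  have hC : ∀ w w', H.Adj w w' → C w ≠ C w' := fun w w' h => C.valid h
  have hmax := StarQ.maxDeg_fsum hn H hΔ
  have hMBE := StarQ.isMBE_fsum (n := n) H (fun w => C w) hC f hH.1 pg (maxDeg H) hΔ hH
  refine ⟨le_antisymm ?_ (StarQ.maxDeg_le_mbt _), hmax⟩
  rw [hmax]
  exact StarQ.mbt_le_of_isMBE _ hMBE
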